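/- arXiv:1309.4510 — 2 statements merged into one kernel-verified Lean document; each statement's English description precedes it below -/
import Mathlib

section
/- Let g_m = ρ_{t^k,t}(h_m) where ρ_{t^k,t} is the algebra homomorphism on symmetric functions sending p_j to ((1-t^{kj})/(1-t^j)) p_j, and h_m is the complete homogeneous symmetric function. Then the coefficient of h_π in the expansion g_m = Σ_π a_π(t) h_π is a_π(t) = Σ_{β} Σ_{0 ≤ a_1 < a_2 < ⋯ < a_ℓ ≤ k-1} t^{a_1 β_1 + ⋯ + a_ℓ β_ℓ}, where ℓ = ℓ(π) is the number of parts of π, the outer sum is over all rearrangements β of π (the S_ℓ-orbit of the sequence of parts of π), and the inner sum over strictly increasing sequences of integers in [0, k-1]. -/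
open MvPolynomial

noncomputable section

/-- The coefficient field `ℂ(t)`. -/
abbrev K : Type := RatFunc ℂ

/-- The variable `t`. -/
def tt : K := RatFunc.X

/-- The ring of symmetric functions, presented as polynomials in the
power sums `p_1, p_2, …` (the variable `X j` represents `p_j`). -/
abbrev SymFun : Type := MvPolynomial ℕ+ K

/-- `p_μ` for a partition `μ` given by its multiplicity function `d`
(`d j` = number of parts of `μ` equal to `j`). -/
def pPow (d : ℕ+ →₀ ℕ) : SymFun := monomial d 1

/-- `z(μ) = |Aut μ| ⬝ ∏_j μ_j`. -/
def zPart (d : ℕ+ →₀ ℕ) : ℕ := d.prod fun j m => m.factorial * (j : ℕ) ^ m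

/-- The Macdonald bilinear form with parameters `q`, `t`, defined on the
power sum basis by `(p_μ, p_ν) = δ_{μν} z(μ) ∏_j (1-q^{μ_j})/(1-t^{μ_j})`. -/
def macForm (q t : K) (f g : SymFun) : K :=
  ∑ d ∈ f.support ∪ g.support,
    coeff d f * coeff d g *
      ((zPart d : K) * d.prod fun j m => ((1 - q ^ (j : ℕ)) / (1 - t ^ (j : ℕ))) ^ m)

/-- The power sum `p_{i+1}` as an element of `SymFun`. -/
def pVar (i : ℕ) : SymFun := X (⟨i + 1, Nat.succ_pos i⟩ : ℕ+)

/-- The complete homogeneous symmetric function `h_n`, via Newton's identity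
`n h_n = ∑_{i=1}^n p_i h_{n-i}`. -/
def hSym : ℕ → SymFun
  | 0 => 1
  | n + 1 =>
    ((n + 1 : K))⁻¹ • ∑ i ∈ Finset.range (n + 1), pVar i * hSym (n - i)
  decreasing_by omega

/-- `h_n` for an integer index, with `h_n = 0` for `n < 0`. -/
def hZ (n : ℤ) : SymFun := if 0 ≤ n then hSym n.toNat else 0

/-- Skew Schur function via the Jacobi–Trudi determinant
`s_{λ/μ} = det (h_{λ_i - μ_j - i + j})`. -/
def skewSchur (lam mu : List ℕ) : SymFun :=
  Matrix.det (Matrix.of fun i j : Fin (max lam.length mu.length) =>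
    hZ ((lam.getD i 0 : ℤ) - (mu.getD j 0 : ℤ) - (i : ℤ) + (j : ℤ)))

/-- Schur function. -/
def schur (lam : List ℕ) : SymFun := skewSchur lam []

/-- A list of naturals presents a partition iff it is weakly decreasing with
positive entries. -/
def IsPartList (l : List ℕ) : Prop := l.Pairwise (· ≥ ·) ∧ ∀ x ∈ l, 0 < x


/-- The algebra homomorphism `ρ_{t^k,t} : p_j ↦ ((1-t^{kj})/(1-t^j)) p_j`. -/
def rho (k : ℕ) : SymFun →ₐ[K] SymFun :=
  aeval fun j : ℕ+ => ((1 - tt ^ (k * (j : ℕ))) / (1 - tt ^ (j : ℕ))) • (X j : SymFun)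

/-- `h_π = ∏_i h_{π_i}` for a partition `π` given as a multiset of parts. -/
def hProd (π : Multiset ℕ) : SymFun := (π.map hSym).prod

-- ===== auxiliary development =====
open Finset in
lemma hSym_zero : hSym 0 = 1 := by rw [hSym]

instance : CharZero K := charZero_of_injective_algebraMap (algebraMap ℂ K).injective

lemma natcast_succ_ne_zero (n : ℕ) : ((n + 1 : ℕ) : K) ≠ 0 := by
  exact_mod_cast Nat.cast_add_one_ne_zero (R := K) n

lemma hSym_newton (n : ℕ) :
    ((n + 1 : ℕ) : K) • hSym (n + 1) = ∑ i ∈ Finset.range (n + 1), pVar i * hSym (n - i) := by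
  have h : ((n : K) + 1) ≠ 0 := by exact_mod_cast natcast_succ_ne_zero n
  rw [hSym, smul_smul]
  push_cast
  rw [mul_inv_cancel₀ h, one_smul]

def rhoC (c : ℕ+ → K) : SymFun →ₐ[K] SymFun := aeval fun j => c j • (X j : SymFun)

lemma rhoC_pVar (c : ℕ+ → K) (i : ℕ) :
    rhoC c (pVar i) = c ⟨i + 1, i.succ_pos⟩ • pVar i := by
  exact aeval_X _ _

lemma rhoC_newton (c : ℕ+ → K) (n : ℕ) :
    ((n + 1 : ℕ) : K) • rhoC c (hSym (n + 1)) =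
      ∑ i ∈ Finset.range (n + 1), c ⟨i + 1, i.succ_pos⟩ • (pVar i * rhoC c (hSym (n - i))) := by
  rw [← map_smul, hSym_newton, map_sum]
  refine Finset.sum_congr rfl fun i _ => ?_
  rw [map_mul, rhoC_pVar, smul_mul_assoc]

lemma triangle_sum {M : Type*} [AddCommMonoid M] (n : ℕ) (f : ℕ → ℕ → M) :
    ∑ p ∈ Finset.range (n + 1), ∑ i ∈ Finset.range (p + 1), f i (p - i)
      = ∑ i ∈ Finset.range (n + 1), ∑ q ∈ Finset.range (n - i + 1), f i q := by
  rw [Finset.sum_sigma', Finset.sum_sigma']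
  refine Finset.sum_bij' (fun x _ => (⟨x.2, x.1 - x.2⟩ : Σ _ : ℕ, ℕ))
    (fun x _ => (⟨x.1 + x.2, x.1⟩ : Σ _ : ℕ, ℕ)) ?_ ?_ ?_ ?_ ?_
  · intro x hx
    simp only [Finset.mem_sigma, Finset.mem_range] at hx ⊢
    omega
  · intro x hx
    simp only [Finset.mem_sigma, Finset.mem_range] at hx ⊢
    omega
  · intro x hx
    simp only [Finset.mem_sigma, Finset.mem_range] at hx
    obtain ⟨x1, x2⟩ := x
    dsimp only at hx ⊢
    have h : x2 + (x1 - x2) = x1 := by omega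
    rw [h]
  · intro x hx
    obtain ⟨x1, x2⟩ := x
    dsimp only
    have h : x1 + x2 - x1 = x2 := by omega
    rw [h]
  · intro x hx
    rfl

lemma swap_sum {M : Type*} [AddCommMonoid M] (n : ℕ) (F : ℕ × ℕ → M) :
    ∑ pq ∈ Finset.HasAntidiagonal.antidiagonal n, F pq = ∑ pq ∈ Finset.HasAntidiagonal.antidiagonal n, F pq.swap := by
  conv_lhs => rw [← Finset.HasAntidiagonal.map_swap_antidiagonal (n := n)]
  rw [Finset.sum_map]
  rfl

lemma antidiag_smul_sum (a : ℕ+ → K) (A B : ℕ → SymFun)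
    (hA : ∀ p : ℕ, ((p + 1 : ℕ) : K) • A (p + 1)
      = ∑ i ∈ Finset.range (p + 1), a ⟨i + 1, i.succ_pos⟩ • (pVar i * A (p - i)))
    (n : ℕ) :
    ∑ pq ∈ Finset.HasAntidiagonal.antidiagonal (n + 1), ((pq.1 : ℕ) : K) • (A pq.1 * B pq.2)
      = ∑ i ∈ Finset.range (n + 1), a ⟨i + 1, i.succ_pos⟩ •
          (pVar i * ∑ pq ∈ Finset.HasAntidiagonal.antidiagonal (n - i), A pq.1 * B pq.2) := by
  rw [Finset.Nat.sum_antidiagonal_eq_sum_range_succ_mk, Finset.sum_range_succ']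
  simp only [Nat.cast_zero, zero_smul, add_zero]
  have key : ∀ p ∈ Finset.range (n + 1),
      ((p + 1 : ℕ) : K) • (A (p + 1) * B (n + 1 - (p + 1)))
        = ∑ i ∈ Finset.range (p + 1),
            a ⟨i + 1, i.succ_pos⟩ • (pVar i * (A (p - i) * B (n - i - (p - i)))) := by
    intro p hp
    have e1 : n + 1 - (p + 1) = n - p := by omega
    rw [e1, ← smul_mul_assoc, hA p, Finset.sum_mul]
    refine Finset.sum_congr rfl fun i hi => ?_
    rw [Finset.mem_range] at hi
    rw [smul_mul_assoc, mul_assoc]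
    have e2 : n - p = n - i - (p - i) := by omega
    rw [e2]
  rw [Finset.sum_congr rfl key,
    triangle_sum n (fun i q => a ⟨i + 1, i.succ_pos⟩ • (pVar i * (A q * B (n - i - q))))]
  refine Finset.sum_congr rfl fun i hi => ?_
  rw [Finset.Nat.sum_antidiagonal_eq_sum_range_succ_mk, Finset.mul_sum, Finset.smul_sum]

lemma rhoC_add (a b : ℕ+ → K) (m : ℕ) :
    rhoC (fun j => a j + b j) (hSym m)
      = ∑ pq ∈ Finset.HasAntidiagonal.antidiagonal m, rhoC a (hSym pq.1) * rhoC b (hSym pq.2) := by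
  induction m using Nat.strong_induction_on with
  | _ m IH =>
  match m with
  | 0 => simp [hSym_zero]
  | (n + 1) =>
    have hRA : ∀ p : ℕ, ((p + 1 : ℕ) : K) • rhoC a (hSym (p + 1))
        = ∑ i ∈ Finset.range (p + 1), a ⟨i + 1, i.succ_pos⟩ • (pVar i * rhoC a (hSym (p - i))) :=
      fun p => rhoC_newton a p
    have hRB : ∀ p : ℕ, ((p + 1 : ℕ) : K) • rhoC b (hSym (p + 1))
        = ∑ i ∈ Finset.range (p + 1), b ⟨i + 1, i.succ_pos⟩ • (pVar i * rhoC b (hSym (p - i))) :=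
      fun p => rhoC_newton b p
    have swapAB : ∀ t : ℕ,
        ∑ pq ∈ Finset.HasAntidiagonal.antidiagonal t, rhoC b (hSym pq.1) * rhoC a (hSym pq.2)
          = ∑ pq ∈ Finset.HasAntidiagonal.antidiagonal t, rhoC a (hSym pq.1) * rhoC b (hSym pq.2) := by
      intro t
      refine (swap_sum t (fun pq => rhoC b (hSym pq.1) * rhoC a (hSym pq.2))).trans ?_
      exact Finset.sum_congr rfl fun pq _ => mul_comm _ _
    have claim_b :
        ∑ pq ∈ Finset.HasAntidiagonal.antidiagonal (n + 1),
            ((pq.2 : ℕ) : K) • (rhoC a (hSym pq.1) * rhoC b (hSym pq.2))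
          = ∑ i ∈ Finset.range (n + 1), b ⟨i + 1, i.succ_pos⟩ •
              (pVar i * ∑ pq ∈ Finset.HasAntidiagonal.antidiagonal (n - i),
                rhoC a (hSym pq.1) * rhoC b (hSym pq.2)) := by
      refine ((swap_sum (n + 1)
        (fun pq => ((pq.2 : ℕ) : K) • (rhoC a (hSym pq.1) * rhoC b (hSym pq.2)))).trans ?_)
      have e2 : ∑ pq ∈ Finset.HasAntidiagonal.antidiagonal (n + 1),
            ((pq.1 : ℕ) : K) • (rhoC b (hSym pq.1) * rhoC a (hSym pq.2))
          = ∑ i ∈ Finset.range (n + 1), b ⟨i + 1, i.succ_pos⟩ •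
              (pVar i * ∑ pq ∈ Finset.HasAntidiagonal.antidiagonal (n - i),
                rhoC b (hSym pq.1) * rhoC a (hSym pq.2)) :=
        antidiag_smul_sum b (fun p => rhoC b (hSym p)) (fun q => rhoC a (hSym q)) hRB n
      refine Eq.trans ?_ (e2.trans ?_)
      · refine Finset.sum_congr rfl fun pq _ => ?_
        simp only [Prod.fst_swap, Prod.snd_swap]
        rw [mul_comm]
      · exact Finset.sum_congr rfl fun i _ => by rw [swapAB]
    have claim_a :
        ∑ pq ∈ Finset.HasAntidiagonal.antidiagonal (n + 1),
            ((pq.1 : ℕ) : K) • (rhoC a (hSym pq.1) * rhoC b (hSym pq.2))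
          = ∑ i ∈ Finset.range (n + 1), a ⟨i + 1, i.succ_pos⟩ •
              (pVar i * ∑ pq ∈ Finset.HasAntidiagonal.antidiagonal (n - i),
                rhoC a (hSym pq.1) * rhoC b (hSym pq.2)) :=
      antidiag_smul_sum a (fun p => rhoC a (hSym p)) (fun q => rhoC b (hSym q)) hRA n
    have main : ((n + 1 : ℕ) : K) •
          ∑ pq ∈ Finset.HasAntidiagonal.antidiagonal (n + 1), rhoC a (hSym pq.1) * rhoC b (hSym pq.2)
        = (∑ pq ∈ Finset.HasAntidiagonal.antidiagonal (n + 1),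
              ((pq.1 : ℕ) : K) • (rhoC a (hSym pq.1) * rhoC b (hSym pq.2)))
          + ∑ pq ∈ Finset.HasAntidiagonal.antidiagonal (n + 1),
              ((pq.2 : ℕ) : K) • (rhoC a (hSym pq.1) * rhoC b (hSym pq.2)) := by
      rw [Finset.smul_sum, ← Finset.sum_add_distrib]
      refine Finset.sum_congr rfl fun pq hpq => ?_
      rw [← add_smul]
      have h := Finset.HasAntidiagonal.mem_antidiagonal.mp hpq
      congr 1
      rw [← h, Nat.cast_add]
    apply smul_right_injective SymFun (natcast_succ_ne_zero n)
    show ((n + 1 : ℕ) : K) • rhoC (fun j => a j + b j) (hSym (n + 1)) = ((n + 1 : ℕ) : K) • _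
    calc ((n + 1 : ℕ) : K) • rhoC (fun j => a j + b j) (hSym (n + 1))
        = ∑ i ∈ Finset.range (n + 1), (a ⟨i + 1, i.succ_pos⟩ + b ⟨i + 1, i.succ_pos⟩) •
            (pVar i * rhoC (fun j => a j + b j) (hSym (n - i))) := rhoC_newton _ n
      _ = ∑ i ∈ Finset.range (n + 1),
            (a ⟨i + 1, i.succ_pos⟩ •
              (pVar i * ∑ pq ∈ Finset.HasAntidiagonal.antidiagonal (n - i),
                rhoC a (hSym pq.1) * rhoC b (hSym pq.2))
            + b ⟨i + 1, i.succ_pos⟩ •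
              (pVar i * ∑ pq ∈ Finset.HasAntidiagonal.antidiagonal (n - i),
                rhoC a (hSym pq.1) * rhoC b (hSym pq.2))) := by
            refine Finset.sum_congr rfl fun i hi => ?_
            rw [Finset.mem_range] at hi
            rw [IH (n - i) (by omega), add_smul]
      _ = (∑ i ∈ Finset.range (n + 1), a ⟨i + 1, i.succ_pos⟩ •
              (pVar i * ∑ pq ∈ Finset.HasAntidiagonal.antidiagonal (n - i),
                rhoC a (hSym pq.1) * rhoC b (hSym pq.2)))
          + ∑ i ∈ Finset.range (n + 1), b ⟨i + 1, i.succ_pos⟩ •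
              (pVar i * ∑ pq ∈ Finset.HasAntidiagonal.antidiagonal (n - i),
                rhoC a (hSym pq.1) * rhoC b (hSym pq.2)) := Finset.sum_add_distrib
      _ = ((n + 1 : ℕ) : K) •
            ∑ pq ∈ Finset.HasAntidiagonal.antidiagonal (n + 1), rhoC a (hSym pq.1) * rhoC b (hSym pq.2) := by
            rw [← claim_a, ← claim_b, ← main]

lemma rhoC_scale (c : K) (m : ℕ) :
    rhoC (fun j => c ^ (j : ℕ)) (hSym m) = c ^ m • hSym m := by
  induction m using Nat.strong_induction_on with
  | _ m IH =>
  match m with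
  | 0 => rw [hSym_zero, map_one, pow_zero, one_smul]
  | (n + 1) =>
    apply smul_right_injective SymFun (natcast_succ_ne_zero n)
    show ((n + 1 : ℕ) : K) • rhoC (fun j => c ^ (j : ℕ)) (hSym (n + 1))
      = ((n + 1 : ℕ) : K) • _
    calc ((n + 1 : ℕ) : K) • rhoC (fun j => c ^ (j : ℕ)) (hSym (n + 1))
        = ∑ i ∈ Finset.range (n + 1), c ^ (i + 1) •
            (pVar i * rhoC (fun j => c ^ (j : ℕ)) (hSym (n - i))) := rhoC_newton _ n
      _ = ∑ i ∈ Finset.range (n + 1), c ^ (n + 1) • (pVar i * hSym (n - i)) := by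
            refine Finset.sum_congr rfl fun i hi => ?_
            rw [Finset.mem_range] at hi
            rw [IH (n - i) (by omega), mul_smul_comm, smul_smul, ← pow_add]
            congr 2
            omega
      _ = c ^ (n + 1) • ∑ i ∈ Finset.range (n + 1), pVar i * hSym (n - i) :=
            (Finset.smul_sum).symm
      _ = c ^ (n + 1) • (((n + 1 : ℕ) : K) • hSym (n + 1)) := by rw [hSym_newton]
      _ = ((n + 1 : ℕ) : K) • (c ^ (n + 1) • hSym (n + 1)) := smul_comm _ _ _

lemma tt_pow_ne_one (n : ℕ) (hn : n ≠ 0) : (tt : K) ^ n ≠ 1 := by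
  intro h
  have h2 : algebraMap (Polynomial ℂ) K (Polynomial.X ^ n) = algebraMap (Polynomial ℂ) K 1 := by
    rw [map_pow, map_one, RatFunc.algebraMap_X]
    exact h
  have h3 := RatFunc.algebraMap_injective ℂ h2
  have h4 := congrArg Polynomial.natDegree h3
  simp only [Polynomial.natDegree_X_pow, Polynomial.natDegree_one] at h4
  exact hn h4

lemma tuple_snoc_sum {M : Type*} [AddCommMonoid M] (k m : ℕ) (F : (Fin (k + 1) → ℕ) → M) :
    ∑ f ∈ Finset.Nat.antidiagonalTuple (k + 1) m, F f
      = ∑ pq ∈ Finset.HasAntidiagonal.antidiagonal m, ∑ g ∈ Finset.Nat.antidiagonalTuple k pq.1,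
          F (Fin.snoc g pq.2) := by
  rw [Finset.sum_sigma']
  refine Finset.sum_bij'
    (fun f _ => (⟨(∑ a : Fin k, f a.castSucc, f (Fin.last k)), fun a => f a.castSucc⟩ :
      Σ _ : ℕ × ℕ, Fin k → ℕ))
    (fun x _ => (Fin.snoc x.2 x.1.2 : Fin (k + 1) → ℕ)) ?_ ?_ ?_ ?_ ?_
  · intro f hf
    rw [Finset.Nat.mem_antidiagonalTuple] at hf
    rw [Finset.mem_sigma, Finset.HasAntidiagonal.mem_antidiagonal]
    dsimp only
    refine ⟨?_, Finset.Nat.mem_antidiagonalTuple.mpr rfl⟩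
    rw [← hf, Fin.sum_univ_castSucc]
  · intro x hx
    rw [Finset.mem_sigma, Finset.HasAntidiagonal.mem_antidiagonal, Finset.Nat.mem_antidiagonalTuple] at hx
    rw [Finset.Nat.mem_antidiagonalTuple, Fin.sum_univ_castSucc, Fin.snoc_last]
    have e : ∀ a : Fin k, (Fin.snoc x.2 x.1.2 : Fin (k + 1) → ℕ) a.castSucc = x.2 a :=
      fun a => Fin.snoc_castSucc _ _ _
    rw [Finset.sum_congr rfl fun a _ => e a, hx.2, hx.1]
  · intro f hf
    exact Fin.snoc_init_self f
  · intro x hx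
    rw [Finset.mem_sigma, Finset.HasAntidiagonal.mem_antidiagonal, Finset.Nat.mem_antidiagonalTuple] at hx
    obtain ⟨⟨p, q⟩, g⟩ := x
    dsimp only at hx ⊢
    have e : (fun a : Fin k => (Fin.snoc g q : Fin (k + 1) → ℕ) a.castSucc) = g :=
      funext fun a => Fin.snoc_castSucc _ _ _
    rw [e, Fin.snoc_last, hx.2]
  · intro f hf
    dsimp only
    rw [show (Fin.snoc (fun a : Fin k => f a.castSucc) (f (Fin.last k)) : Fin (k + 1) → ℕ) = f
      from Fin.snoc_init_self f]

lemma rhoC_geom (k m : ℕ) :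
    rhoC (fun j => ∑ a ∈ Finset.range k, tt ^ (a * (j : ℕ))) (hSym m)
      = ∑ f ∈ Finset.Nat.antidiagonalTuple k m,
          (∏ a : Fin k, tt ^ ((a : ℕ) * f a)) • ∏ a : Fin k, hSym (f a) := by
  induction k generalizing m with
  | zero =>
    have e : (fun j : ℕ+ => ∑ a ∈ Finset.range 0, tt ^ (a * (j : ℕ)))
        = fun j : ℕ+ => (0 : K) ^ (j : ℕ) := by
      funext j
      rw [Finset.range_zero, Finset.sum_empty, zero_pow j.pos.ne']
    rw [e, rhoC_scale]
    cases m with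
    | zero => simp [hSym_zero]
    | succ n =>
      rw [zero_pow (Nat.succ_ne_zero n), zero_smul, Finset.Nat.antidiagonalTuple_zero_succ,
        Finset.sum_empty]
  | succ k IH =>
    have e1 : rhoC (fun j : ℕ+ => ∑ a ∈ Finset.range (k + 1), tt ^ (a * (j : ℕ))) (hSym m)
        = ∑ pq ∈ Finset.HasAntidiagonal.antidiagonal m,
            rhoC (fun j : ℕ+ => ∑ a ∈ Finset.range k, tt ^ (a * (j : ℕ))) (hSym pq.1)
              * rhoC (fun j : ℕ+ => (tt ^ k) ^ (j : ℕ)) (hSym pq.2) := by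
      rw [show (fun j : ℕ+ => ∑ a ∈ Finset.range (k + 1), tt ^ (a * (j : ℕ)))
            = (fun j : ℕ+ => (∑ a ∈ Finset.range k, tt ^ (a * (j : ℕ))) + (tt ^ k) ^ (j : ℕ)) from
          funext fun j => by rw [Finset.sum_range_succ, ← pow_mul]]
      exact rhoC_add _ _ m
    rw [e1,
      tuple_snoc_sum k m
        (fun f => (∏ a : Fin (k + 1), tt ^ ((a : ℕ) * f a)) • ∏ a : Fin (k + 1), hSym (f a))]
    refine Finset.sum_congr rfl fun pq hpq => ?_
    rw [IH pq.1, rhoC_scale (tt ^ k) pq.2, Finset.sum_mul]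
    refine Finset.sum_congr rfl fun g hg => ?_
    rw [smul_mul_smul_comm]
    congr 1
    · rw [Fin.prod_univ_castSucc]
      congr 1
      · refine Finset.prod_congr rfl fun a _ => ?_
        rw [Fin.snoc_castSucc, Fin.coe_castSucc]
      · rw [Fin.snoc_last, Fin.val_last, ← pow_mul]
    · rw [Fin.prod_univ_castSucc]
      congr 1
      · refine Finset.prod_congr rfl fun a _ => ?_
        rw [Fin.snoc_castSucc]
      · rw [Fin.snoc_last]

lemma stepA (k m : ℕ) :
    rho k (hSym m) = ∑ f ∈ Finset.Nat.antidiagonalTuple k m,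
      (∏ a : Fin k, tt ^ ((a : ℕ) * f a)) • ∏ a : Fin k, hSym (f a) := by
  have h : (fun j : ℕ+ => ((1 - tt ^ (k * (j : ℕ))) / (1 - tt ^ (j : ℕ))) • (X j : SymFun))
      = fun j : ℕ+ => (∑ a ∈ Finset.range k, tt ^ (a * (j : ℕ))) • (X j : SymFun) := by
    funext j
    congr 1
    have hj : (tt : K) ^ (j : ℕ) ≠ 1 := tt_pow_ne_one _ j.pos.ne'
    have hden : (1 : K) - tt ^ (j : ℕ) ≠ 0 := sub_ne_zero.mpr (Ne.symm hj)
    have hden' : (tt : K) ^ (j : ℕ) - 1 ≠ 0 := sub_ne_zero.mpr hj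
    have e : ∑ a ∈ Finset.range k, tt ^ (a * (j : ℕ))
        = ∑ a ∈ Finset.range k, (tt ^ (j : ℕ)) ^ a :=
      Finset.sum_congr rfl fun a _ => by rw [← pow_mul, mul_comm]
    rw [e, geom_sum_eq hj k, ← pow_mul, mul_comm (j : ℕ) k, div_eq_div_iff hden hden']
    ring
  unfold rho
  rw [h]
  exact rhoC_geom k m


-- ===== combinatorial reindexing =====

def gExt (k : ℕ) (f : Fin k → ℕ) : ℕ → ℕ := fun a => if h : a < k then f ⟨a, h⟩ else 0

def supp (k : ℕ) (f : Fin k → ℕ) : Finset ℕ := (Finset.range k).filter fun a => gExt k f a ≠ 0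

def betaOf (k : ℕ) (f : Fin k → ℕ) : List ℕ := ((supp k f).sort (· ≤ ·)).map (gExt k f)

def invF (k : ℕ) (β : List ℕ) (S : Finset ℕ) : Fin k → ℕ :=
  fun a => β.getD ((S.sort (· ≤ ·)).idxOf (a : ℕ)) 0

lemma list_sum_getD {M : Type*} [AddCommMonoid M] (l : List M) :
    l.sum = ∑ i ∈ Finset.range l.length, l.getD i 0 := by
  induction l with
  | nil => simp
  | cons x xs ih =>
    rw [List.sum_cons, List.length_cons, Finset.sum_range_succ']
    simp [ih, add_comm]

lemma sort_map_sum {M : Type*} [AddCommMonoid M] (S : Finset ℕ) (F : ℕ → M) :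
    ((S.sort (· ≤ ·)).map F).sum = ∑ a ∈ S, F a := by
  have h : (((S.sort (· ≤ ·)).map F : List M) : Multiset M) = S.val.map F := by
    rw [← Multiset.map_coe, Finset.sort_eq]
  calc ((S.sort (· ≤ ·)).map F).sum
      = (((S.sort (· ≤ ·)).map F : List M) : Multiset M).sum := (Multiset.sum_coe _).symm
    _ = (S.val.map F).sum := by rw [h]
    _ = ∑ a ∈ S, F a := rfl

lemma sort_map_prod {M : Type*} [CommMonoid M] (S : Finset ℕ) (F : ℕ → M) :
    ((S.sort (· ≤ ·)).map F).prod = ∏ a ∈ S, F a := by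
  have h : (((S.sort (· ≤ ·)).map F : List M) : Multiset M) = S.val.map F := by
    rw [← Multiset.map_coe, Finset.sort_eq]
  calc ((S.sort (· ≤ ·)).map F).prod
      = (((S.sort (· ≤ ·)).map F : List M) : Multiset M).prod := (Multiset.prod_coe _).symm
    _ = (S.val.map F).prod := by rw [h]
    _ = ∏ a ∈ S, F a := rfl

lemma map_getD_indexOf (L β : List ℕ) (hnd : L.Nodup) (hlen : L.length = β.length) :
    L.map (fun a => β.getD (L.idxOf a) 0) = β := by
  refine List.ext_getElem (by rw [List.length_map, hlen]) fun i h1 h2 => ?_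
  rw [List.getElem_map, List.Nodup.idxOf_getElem hnd]
  exact List.getD_eq_getElem β 0 h2

lemma sum_gExt' {M : Type*} [AddCommMonoid M] (k : ℕ) (f : Fin k → ℕ)
    (F : ℕ → ℕ → M) :
    ∑ a ∈ Finset.range k, F a (gExt k f a) = ∑ i : Fin k, F (i : ℕ) (f i) := by
  rw [← Fin.sum_univ_eq_sum_range (fun a => F a (gExt k f a)) k]
  refine Finset.sum_congr rfl fun i _ => ?_
  have h : gExt k f (i : ℕ) = f i := by simp [gExt]
  rw [h]

lemma prod_gExt' {M : Type*} [CommMonoid M] (k : ℕ) (f : Fin k → ℕ)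
    (F : ℕ → ℕ → M) :
    ∏ a ∈ Finset.range k, F a (gExt k f a) = ∏ i : Fin k, F (i : ℕ) (f i) := by
  rw [← Fin.prod_univ_eq_prod_range (fun a => F a (gExt k f a)) k]
  refine Finset.prod_congr rfl fun i _ => ?_
  have h : gExt k f (i : ℕ) = f i := by simp [gExt]
  rw [h]

lemma sum_supp {M : Type*} [AddCommMonoid M] (k : ℕ) (f : Fin k → ℕ)
    (F : ℕ → ℕ → M) (hF : ∀ a, F a 0 = 0) :
    ∑ a ∈ supp k f, F a (gExt k f a) = ∑ a ∈ Finset.range k, F a (gExt k f a) := by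
  refine Finset.sum_filter_of_ne fun a _ hne => ?_
  intro h0
  exact hne (by rw [h0]; exact hF a)

lemma prod_supp {M : Type*} [CommMonoid M] (k : ℕ) (f : Fin k → ℕ)
    (F : ℕ → ℕ → M) (hF : ∀ a, F a 0 = 1) :
    ∏ a ∈ supp k f, F a (gExt k f a) = ∏ a ∈ Finset.range k, F a (gExt k f a) := by
  refine Finset.prod_filter_of_ne fun a _ hne => ?_
  intro h0
  exact hne (by rw [h0]; exact hF a)

lemma betaOf_length (k : ℕ) (f : Fin k → ℕ) : (betaOf k f).length = (supp k f).card := by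
  rw [betaOf, List.length_map, Finset.length_sort]

lemma betaOf_sum (k : ℕ) (f : Fin k → ℕ) : (betaOf k f).sum = ∑ i : Fin k, f i := by
  rw [betaOf, sort_map_sum]
  exact (sum_supp k f (fun _ v => v) fun _ => rfl).trans (sum_gExt' k f fun _ v => v)

lemma betaOf_pos (k : ℕ) (f : Fin k → ℕ) : ∀ x ∈ betaOf k f, 0 < x := by
  intro x hx
  rw [betaOf, List.mem_map] at hx
  obtain ⟨a, ha, rfl⟩ := hx
  rw [Finset.mem_sort, supp, Finset.mem_filter] at ha
  exact Nat.pos_of_ne_zero ha.2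

lemma notmem_getD (β : List ℕ) (S : Finset ℕ) (a : ℕ) (hcard : S.card = β.length)
    (ha : a ∉ S) : β.getD ((S.sort (· ≤ ·)).idxOf a) 0 = 0 := by
  have hidx : (S.sort (· ≤ ·)).idxOf a = (S.sort (· ≤ ·)).length :=
    List.idxOf_eq_length fun hm => ha ((Finset.mem_sort _).mp hm)
  rw [hidx, Finset.length_sort, hcard]
  exact List.getD_eq_default _ _ le_rfl

lemma mem_getD_pos (β : List ℕ) (S : Finset ℕ) (a : ℕ) (hcard : S.card = β.length)
    (hpos : ∀ x ∈ β, 0 < x) (ha : a ∈ S) :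
    0 < β.getD ((S.sort (· ≤ ·)).idxOf a) 0 := by
  have hm : a ∈ S.sort (· ≤ ·) := (Finset.mem_sort _).mpr ha
  have hidx : (S.sort (· ≤ ·)).idxOf a < (S.sort (· ≤ ·)).length :=
    List.idxOf_lt_length_iff.mpr hm
  have hβ : (S.sort (· ≤ ·)).idxOf a < β.length := by
    rwa [Finset.length_sort, hcard] at hidx
  rw [List.getD_eq_getElem β 0 hβ]
  exact hpos _ (List.getElem_mem _)

lemma sum_sort_getD {M : Type*} [AddCommMonoid M] (S : Finset ℕ) (G : ℕ → M) :
    ∑ a ∈ S, G a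
      = ∑ i ∈ Finset.range (S.sort (· ≤ ·)).length, G ((S.sort (· ≤ ·)).getD i 0) := by
  rw [← sort_map_sum, list_sum_getD, List.length_map]
  refine Finset.sum_congr rfl fun i hi => ?_
  rw [Finset.mem_range] at hi
  rw [List.getD_eq_getElem _ 0 (by rw [List.length_map]; exact hi), List.getElem_map,
    List.getD_eq_getElem _ 0 hi]

lemma gExt_invF (k : ℕ) (β : List ℕ) (S : Finset ℕ)
    (hsub : S ⊆ Finset.range k) (hcard : S.card = β.length) :
    gExt k (invF k β S) = fun a => β.getD ((S.sort (· ≤ ·)).idxOf a) 0 := by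
  funext a
  by_cases h : a < k
  · simp only [gExt, dif_pos h]
    rfl
  · have ha : a ∉ S := fun hmem => h (Finset.mem_range.mp (hsub hmem))
    simp only [gExt, dif_neg h]
    exact (notmem_getD β S a hcard ha).symm

lemma supp_invF (k : ℕ) (β : List ℕ) (S : Finset ℕ)
    (hsub : S ⊆ Finset.range k) (hcard : S.card = β.length)
    (hpos : ∀ x ∈ β, 0 < x) :
    supp k (invF k β S) = S := by
  ext a
  simp only [supp, Finset.mem_filter, gExt_invF k β S hsub hcard]
  constructor
  · rintro ⟨hr, hne⟩
    by_contra ha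
    exact hne (notmem_getD β S a hcard ha)
  · intro ha
    exact ⟨hsub ha, (mem_getD_pos β S a hcard hpos ha).ne'⟩

lemma betaOf_invF (k : ℕ) (β : List ℕ) (S : Finset ℕ)
    (hsub : S ⊆ Finset.range k) (hcard : S.card = β.length)
    (hpos : ∀ x ∈ β, 0 < x) :
    betaOf k (invF k β S) = β := by
  rw [betaOf, supp_invF k β S hsub hcard hpos, gExt_invF k β S hsub hcard]
  exact map_getD_indexOf _ β (Finset.sort_nodup _ _) (by rw [Finset.length_sort, hcard])

lemma invF_betaOf (k : ℕ) (f : Fin k → ℕ) : invF k (betaOf k f) (supp k f) = f := by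
  funext a
  show (betaOf k f).getD (((supp k f).sort (· ≤ ·)).idxOf (a : ℕ)) 0 = f a
  by_cases h : f a = 0
  · have ha : (a : ℕ) ∉ supp k f := by
      simp only [supp, Finset.mem_filter, not_and, Decidable.not_not]
      intro _
      simp [gExt, a.isLt, h]
    rw [notmem_getD (betaOf k f) (supp k f) a
      (by rw [betaOf, List.length_map, Finset.length_sort]) ha, h]
  · have ha : (a : ℕ) ∈ supp k f := by
      refine Finset.mem_filter.mpr ⟨Finset.mem_range.mpr a.isLt, ?_⟩
      simpa [gExt, a.isLt] using h
    have hm : (a : ℕ) ∈ (supp k f).sort (· ≤ ·) := (Finset.mem_sort _).mpr ha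
    have hidx : ((supp k f).sort (· ≤ ·)).idxOf (a : ℕ)
        < ((supp k f).sort (· ≤ ·)).length := List.idxOf_lt_length_iff.mpr hm
    calc (betaOf k f).getD (((supp k f).sort (· ≤ ·)).idxOf (a : ℕ)) 0
        = (((supp k f).sort (· ≤ ·)).map (gExt k f)).getD
            (((supp k f).sort (· ≤ ·)).idxOf (a : ℕ)) 0 := by rw [betaOf]
      _ = gExt k f (((supp k f).sort (· ≤ ·))[((supp k f).sort (· ≤ ·)).idxOf (a : ℕ)]) := by
          rw [List.getD_eq_getElem _ 0 (by rw [List.length_map]; exact hidx), List.getElem_map]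
      _ = gExt k f (a : ℕ) := by rw [List.getElem_idxOf hidx]
      _ = f a := by simp [gExt]

lemma term_eq (k : ℕ) (f : Fin k → ℕ) :
    (∏ a : Fin k, tt ^ ((a : ℕ) * f a)) • ∏ a : Fin k, hSym (f a)
      = tt ^ (∑ i ∈ Finset.range (betaOf k f).length,
          ((supp k f).sort (· ≤ ·)).getD i 0 * (betaOf k f).getD i 0)
        • hProd (betaOf k f : Multiset ℕ) := by
  have hexp : ∑ i ∈ Finset.range (betaOf k f).length,
      ((supp k f).sort (· ≤ ·)).getD i 0 * (betaOf k f).getD i 0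
        = ∑ a : Fin k, (a : ℕ) * f a := by
    calc ∑ i ∈ Finset.range (betaOf k f).length,
        ((supp k f).sort (· ≤ ·)).getD i 0 * (betaOf k f).getD i 0
        = ∑ i ∈ Finset.range ((supp k f).sort (· ≤ ·)).length,
            ((supp k f).sort (· ≤ ·)).getD i 0
              * gExt k f (((supp k f).sort (· ≤ ·)).getD i 0) := by
          rw [show (betaOf k f).length = ((supp k f).sort (· ≤ ·)).length from
            by rw [betaOf, List.length_map]]
          refine Finset.sum_congr rfl fun i hi => ?_
          rw [Finset.mem_range] at hi
          congr 1
          rw [betaOf, List.getD_eq_getElem _ 0 (by rw [List.length_map]; exact hi),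
            List.getElem_map, List.getD_eq_getElem _ 0 hi]
      _ = ∑ a ∈ supp k f, a * gExt k f a :=
          (sum_sort_getD (supp k f) (fun a => a * gExt k f a)).symm
      _ = ∑ a ∈ Finset.range k, a * gExt k f a :=
          sum_supp k f (fun a v => a * v) fun a => by simp
      _ = ∑ a : Fin k, (a : ℕ) * f a := sum_gExt' k f fun a v => a * v
  have hprod : hProd (betaOf k f : Multiset ℕ) = ∏ a : Fin k, hSym (f a) := by
    rw [hProd]
    calc ((betaOf k f : Multiset ℕ).map hSym).prod
        = (((betaOf k f).map hSym : List SymFun) : Multiset SymFun).prod := by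
          rw [Multiset.map_coe]
      _ = ((betaOf k f).map hSym).prod := Multiset.prod_coe _
      _ = (((supp k f).sort (· ≤ ·)).map (hSym ∘ gExt k f)).prod := by
          rw [betaOf, List.map_map]
      _ = ∏ a ∈ supp k f, (hSym ∘ gExt k f) a := sort_map_prod _ _
      _ = ∏ a ∈ supp k f, hSym (gExt k f a) := Finset.prod_congr rfl fun a _ => rfl
      _ = ∏ a ∈ Finset.range k, hSym (gExt k f a) :=
          prod_supp k f (fun _ v => hSym v) fun _ => hSym_zero
      _ = ∏ a : Fin k, hSym (f a) := prod_gExt' k f fun _ v => hSym v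
  rw [hexp, hprod, Finset.prod_pow_eq_pow_sum]

lemma stepB (k m : ℕ) :
    ∑ f ∈ Finset.Nat.antidiagonalTuple k m,
        (∏ a : Fin k, tt ^ ((a : ℕ) * f a)) • ∏ a : Fin k, hSym (f a)
      = ∑ π : Nat.Partition m,
          (∑ β ∈ π.parts.toList.permutations.toFinset,
            ∑ S ∈ Finset.powersetCard β.length (Finset.range k),
              tt ^ (∑ i ∈ Finset.range β.length,
                (S.sort (· ≤ ·)).getD i 0 * β.getD i 0))
            • hProd π.parts := by
  classical
  -- collapse the RHS into a single sum over a double sigma type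
  have hR : (∑ π : Nat.Partition m,
        (∑ β ∈ π.parts.toList.permutations.toFinset,
          ∑ S ∈ Finset.powersetCard β.length (Finset.range k),
            tt ^ (∑ i ∈ Finset.range β.length,
              (S.sort (· ≤ ·)).getD i 0 * β.getD i 0))
          • hProd π.parts)
      = ∑ x ∈ (Finset.univ : Finset (Nat.Partition m)).sigma
          (fun π => (π.parts.toList.permutations.toFinset).sigma
            (fun β => Finset.powersetCard β.length (Finset.range k))),
          tt ^ (∑ i ∈ Finset.range x.2.1.length,
            (x.2.2.sort (· ≤ ·)).getD i 0 * x.2.1.getD i 0) • hProd x.1.parts := by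
    rw [Finset.sum_sigma]
    refine Finset.sum_congr rfl fun π _ => ?_
    rw [Finset.sum_sigma, Finset.sum_smul]
    refine Finset.sum_congr rfl fun β _ => ?_
    rw [Finset.sum_smul]
  rw [hR]
  refine (Finset.sum_bij'
    (fun x _ => invF k x.2.1 x.2.2)
    (fun f hf => (⟨⟨(betaOf k f : Multiset ℕ),
        fun {y} hy => betaOf_pos k f y (Multiset.mem_coe.mp hy),
        by rw [Multiset.sum_coe, betaOf_sum]
           exact Finset.Nat.mem_antidiagonalTuple.mp hf⟩,
      ⟨betaOf k f, supp k f⟩⟩ :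
      Σ _π : Nat.Partition m, Σ _β : List ℕ, Finset ℕ))
    ?_ ?_ ?_ ?_ ?_).symm
  · -- invF lands in the antidiagonal tuple
    rintro ⟨π, β, S⟩ hx
    simp only [Finset.mem_sigma, Finset.mem_univ, true_and, List.mem_toFinset,
      Finset.mem_powersetCard] at hx
    obtain ⟨hβ, hS1, hS2⟩ := hx
    have hperm : β.Perm π.parts.toList := List.mem_permutations.mp hβ
    have hpos : ∀ y ∈ β, 0 < y := fun y hy =>
      π.parts_pos (Multiset.mem_toList.mp (hperm.subset hy))
    rw [Finset.Nat.mem_antidiagonalTuple]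
    calc ∑ i : Fin k, invF k β S i = (betaOf k (invF k β S)).sum := (betaOf_sum k _).symm
      _ = β.sum := by rw [betaOf_invF k β S hS1 hS2 hpos]
      _ = π.parts.toList.sum := hperm.sum_eq
      _ = π.parts.sum := Multiset.sum_toList _
      _ = m := π.parts_sum
  · -- the triple lands in the sigma set
    intro f hf
    refine Finset.mem_sigma.mpr ⟨Finset.mem_univ _, Finset.mem_sigma.mpr ⟨?_, ?_⟩⟩
    · rw [List.mem_toFinset, List.mem_permutations]
      exact (Multiset.coe_eq_coe.mp (Multiset.coe_toList _)).symm
    · exact Finset.mem_powersetCard.mpr ⟨Finset.filter_subset _ _, (betaOf_length k f).symm⟩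
  · -- left inverse
    rintro ⟨π, β, S⟩ hx
    simp only [Finset.mem_sigma, Finset.mem_univ, true_and, List.mem_toFinset,
      Finset.mem_powersetCard] at hx
    obtain ⟨hβ, hS1, hS2⟩ := hx
    have hperm : β.Perm π.parts.toList := List.mem_permutations.mp hβ
    have hpos : ∀ y ∈ β, 0 < y := fun y hy =>
      π.parts_pos (Multiset.mem_toList.mp (hperm.subset hy))
    have hβ' : betaOf k (invF k β S) = β := betaOf_invF k β S hS1 hS2 hpos
    have hS' : supp k (invF k β S) = S := supp_invF k β S hS1 hS2 hpos
    have hparts : (β : Multiset ℕ) = π.parts := by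
      rw [← Multiset.coe_toList π.parts]
      exact Multiset.coe_eq_coe.mpr hperm
    refine Sigma.ext (Nat.Partition.ext ?_) (heq_of_eq ?_)
    · show (betaOf k (invF k β S) : Multiset ℕ) = π.parts
      rw [hβ', hparts]
    · show (⟨betaOf k (invF k β S), supp k (invF k β S)⟩ : Σ _ : List ℕ, Finset ℕ) = ⟨β, S⟩
      rw [hβ', hS']
  · -- right inverse
    intro f hf
    exact invF_betaOf k f
  · -- values agree
    rintro ⟨π, β, S⟩ hx
    simp only [Finset.mem_sigma, Finset.mem_univ, true_and, List.mem_toFinset,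
      Finset.mem_powersetCard] at hx
    obtain ⟨hβ, hS1, hS2⟩ := hx
    have hperm : β.Perm π.parts.toList := List.mem_permutations.mp hβ
    have hpos : ∀ y ∈ β, 0 < y := fun y hy =>
      π.parts_pos (Multiset.mem_toList.mp (hperm.subset hy))
    have hβ' : betaOf k (invF k β S) = β := betaOf_invF k β S hS1 hS2 hpos
    have hS' : supp k (invF k β S) = S := supp_invF k β S hS1 hS2 hpos
    have hparts : (β : Multiset ℕ) = π.parts := by
      rw [← Multiset.coe_toList π.parts]
      exact Multiset.coe_eq_coe.mpr hperm
    have h := term_eq k (invF k β S)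
    rw [hβ', hS', hparts] at h
    exact h.symm

/-- Writing `g_m = ρ_{t^k,t}(h_m)`, its expansion in the basis
`{h_π}_{π ⊢ m}` is `g_m = ∑_π a_π(t) h_π` with
`a_π(t) = ∑_β ∑_{0 ≤ a_1 < ⋯ < a_ℓ ≤ k-1} t^{a_1β_1 + ⋯ + a_ℓβ_ℓ}`, the outer sum
over all rearrangements `β` of the parts of `π` (`ℓ = ℓ(π)`), the inner sum over
strictly increasing sequences in `[0, k-1]` (realized as subsets `S ⊆ {0,…,k-1}`
of size `ℓ` listed in increasing order). -/
theorem g_m_expansion_in_h_basis (k : ℕ) (hk : 1 ≤ k) (m : ℕ) :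
    rho k (hSym m) =
      ∑ π : Nat.Partition m,
        (∑ β ∈ π.parts.toList.permutations.toFinset,
          ∑ S ∈ Finset.powersetCard β.length (Finset.range k),
            tt ^ (∑ i ∈ Finset.range β.length,
              (S.sort (· ≤ ·)).getD i 0 * β.getD i 0))
          • hProd π.parts := by
  rw [stepA, stepB]

end
end

section
/- For positive integers k, m, n, the identity (h_n^* ∘ (multiplication by h_m)) = Σ_{l ≥ 0} binom(k+l-1, l)_t (multiplication by h_{m-l}) ∘ h_{n-l}^* holds as operators on Λ_{t^k,t}, where h_j^* denotes the adjoint of multiplication by h_j with respect to the Macdonald inner product at q = t^k, and binom(k+l-1, l)_t is the Gaussian binomial coefficient. -/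
set_option synthInstance.maxHeartbeats 400000


open MvPolynomial

noncomputable section

namespace HComm


instance : CharZero K := charZero_of_injective_algebraMap (algebraMap ℂ K).injective

lemma tt_pow_ne_one {m : ℕ} (hm : m ≠ 0) : tt ^ m ≠ 1 := by
  intro h
  have : (Polynomial.X : Polynomial ℂ) ^ m = 1 := by
    apply RatFunc.algebraMap_injective ℂ
    simpa [tt, RatFunc.algebraMap_X, map_pow] using h
  have := congrArg Polynomial.natDegree this
  simp [Polynomial.natDegree_X_pow] at this
  exact hm this

lemma one_sub_tt_pow_ne {m : ℕ} (hm : m ≠ 0) : (1 : K) - tt ^ m ≠ 0 :=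
  sub_ne_zero.mpr (Ne.symm (tt_pow_ne_one hm))

lemma zPart_pos (d : ℕ+ →₀ ℕ) : 0 < zPart d := by
  apply Finset.prod_pos
  intro j hj
  exact Nat.mul_pos (Nat.factorial_pos _) (pow_pos j.2 _)

def B (k : ℕ) (d : ℕ+ →₀ ℕ) : K :=
  (zPart d : K) * d.prod fun j m => ((1 - (tt ^ k) ^ (j : ℕ)) / (1 - tt ^ (j : ℕ))) ^ m

lemma B_ne_zero {k : ℕ} (hk : 1 ≤ k) (d : ℕ+ →₀ ℕ) : B k d ≠ 0 := by
  apply mul_ne_zero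
  · exact Nat.cast_ne_zero.2 (zPart_pos d).ne'
  · rw [Finsupp.prod]
    apply Finset.prod_ne_zero_iff.2
    intro j hj
    apply pow_ne_zero
    apply div_ne_zero
    · rw [← pow_mul]
      exact one_sub_tt_pow_ne (by positivity)
    · exact one_sub_tt_pow_ne j.2.ne'

/-- `macForm` at `q = t^k`. -/
def mf (k : ℕ) (f g : SymFun) : K := macForm (tt ^ k) tt f g

lemma mf_eq_sum (k : ℕ) (f g : SymFun) {S : Finset (ℕ+ →₀ ℕ)}
    (hf : f.support ⊆ S) (hg : g.support ⊆ S) :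
    mf k f g = ∑ d ∈ S, coeff d f * coeff d g * B k d := by
  rw [mf, macForm]
  apply Finset.sum_subset (Finset.union_subset hf hg)
  intro d hd hd'
  rw [notMem_support_iff.1 (Finset.notMem_union.1 hd').1]
  ring

lemma mf_comm (k : ℕ) (f g : SymFun) : mf k f g = mf k g f := by
  rw [mf_eq_sum k f g (S := f.support ∪ g.support) Finset.subset_union_left
    Finset.subset_union_right,
    mf_eq_sum k g f (S := f.support ∪ g.support) Finset.subset_union_right
    Finset.subset_union_left]
  exact Finset.sum_congr rfl fun d _ => by ring

lemma mf_add_left (k : ℕ) (f f' g : SymFun) : mf k (f + f') g = mf k f g + mf k f' g := by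
  set S := (f.support ∪ f'.support) ∪ g.support with hS
  rw [mf_eq_sum k (f+f') g (S := S) ((support_add).trans Finset.subset_union_left)
      Finset.subset_union_right,
    mf_eq_sum k f g (S := S) (Finset.subset_union_left.trans Finset.subset_union_left)
      Finset.subset_union_right,
    mf_eq_sum k f' g (S := S) (Finset.subset_union_right.trans Finset.subset_union_left)
      Finset.subset_union_right,
    ← Finset.sum_add_distrib]
  exact Finset.sum_congr rfl fun d _ => by rw [coeff_add]; ring

lemma mf_smul_left (k : ℕ) (c : K) (f g : SymFun) : mf k (c • f) g = c * mf k f g := by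
  set S := f.support ∪ g.support with hS
  rw [mf_eq_sum k (c • f) g (S := S) ((support_smul).trans Finset.subset_union_left)
      Finset.subset_union_right,
    mf_eq_sum k f g (S := S) Finset.subset_union_left Finset.subset_union_right,
    Finset.mul_sum]
  exact Finset.sum_congr rfl fun d _ => by rw [coeff_smul]; simp; ring

lemma mf_zero_left (k : ℕ) (g : SymFun) : mf k 0 g = 0 := by
  rw [mf_eq_sum k 0 g (S := g.support) (by simp) subset_rfl]
  simp

lemma mf_add_right (k : ℕ) (f g g' : SymFun) : mf k f (g + g') = mf k f g + mf k f g' := by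
  rw [mf_comm, mf_add_left, mf_comm, mf_comm k g']

lemma mf_smul_right (k : ℕ) (c : K) (f g : SymFun) : mf k f (c • g) = c * mf k f g := by
  rw [mf_comm, mf_smul_left, mf_comm]

lemma mf_zero_right (k : ℕ) (f : SymFun) : mf k f 0 = 0 := by rw [mf_comm, mf_zero_left]

lemma mf_sum_left (k : ℕ) {ι : Type*} (s : Finset ι) (f : ι → SymFun) (g : SymFun) :
    mf k (∑ i ∈ s, f i) g = ∑ i ∈ s, mf k (f i) g := by
  induction s using Finset.cons_induction with
  | empty => simp [mf_zero_left]
  | cons i s hi ih => rw [Finset.sum_cons, Finset.sum_cons, mf_add_left, ih]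

lemma mf_sum_right (k : ℕ) {ι : Type*} (s : Finset ι) (f : SymFun) (g : ι → SymFun) :
    mf k f (∑ i ∈ s, g i) = ∑ i ∈ s, mf k f (g i) := by
  rw [mf_comm, mf_sum_left]; exact Finset.sum_congr rfl fun i _ => mf_comm ..

lemma mf_monomial_right (k : ℕ) (f : SymFun) (d : ℕ+ →₀ ℕ) (c : K) :
    mf k f (monomial d c) = coeff d f * c * B k d := by
  rw [mf_eq_sum k f (monomial d c) (S := insert d f.support) (by simp)
    (by refine subset_trans (support_monomial_subset) (by simp))]
  rw [Finset.sum_eq_single_of_mem d (Finset.mem_insert_self d _)]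
  · rw [coeff_monomial, if_pos rfl]
  · intro b _ hb
    rw [coeff_monomial, if_neg (Ne.symm hb)]
    ring


/-- ρ_j. -/
def rho (k : ℕ) (j : ℕ+) : K := (1 - (tt ^ k) ^ (j : ℕ)) / (1 - tt ^ (j : ℕ))

lemma B_def' (k : ℕ) (d : ℕ+ →₀ ℕ) :
    B k d = (zPart d : K) * d.prod fun j m => rho k j ^ m := rfl

/-- The transition coefficient `B k d / B k (d - e)`. -/
def rv (k : ℕ) (d e : ℕ+ →₀ ℕ) : K :=
  e.prod fun j m => ((d j).descFactorial m : K) * ((j : ℕ) : K) ^ m * rho k j ^ m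

lemma rv_eq_zero {k : ℕ} {d e : ℕ+ →₀ ℕ} (h : ¬ e ≤ d) : rv k d e = 0 := by
  rw [Finsupp.le_def] at h
  push_neg at h
  obtain ⟨j, hj⟩ := h
  have hjs : j ∈ e.support := Finsupp.mem_support_iff.2 (by omega)
  apply Finset.prod_eq_zero hjs
  simp [Nat.descFactorial_eq_zero_iff_lt.2 hj]

lemma prod_cast_subset (d : ℕ+ →₀ ℕ) {s : Finset ℕ+} (hs : d.support ⊆ s)
    (g : ℕ+ → ℕ → K) (h1 : ∀ j, g j 0 = 1) :
    d.prod g = ∏ j ∈ s, g j (d j) :=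
  Finsupp.prod_of_support_subset d hs g (fun i _ => h1 i)

lemma rv_mul_B {k : ℕ} {d e : ℕ+ →₀ ℕ} (h : e ≤ d) : rv k d e * B k (d - e) = B k d := by
  classical
  set s := d.support ∪ e.support with hs
  have hd : d.support ⊆ s := Finset.subset_union_left
  have he : e.support ⊆ s := Finset.subset_union_right
  have hde : (d - e).support ⊆ s := (Finsupp.support_tsub).trans hd
  have hB : ∀ f : ℕ+ →₀ ℕ, f.support ⊆ s →
      B k f = ∏ j ∈ s, (((f j).factorial : K) * ((j:ℕ):K) ^ (f j) * rho k j ^ (f j)) := by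
    intro f hf
    calc B k f = ∏ j ∈ f.support, (((f j).factorial : K) * ((j:ℕ):K) ^ (f j) * rho k j ^ (f j)) := by
          rw [B_def', zPart, Finsupp.prod, Finsupp.prod, Nat.cast_prod, ← Finset.prod_mul_distrib]
          exact Finset.prod_congr rfl fun j _ => by push_cast; ring
      _ = _ := Finset.prod_subset hf (fun j _ hj => by rw [Finsupp.notMem_support_iff.1 hj]; simp)
  rw [hB d hd, hB (d - e) hde, rv,
    prod_cast_subset e he _ (fun j => by simp), ← Finset.prod_mul_distrib]
  apply Finset.prod_congr rfl
  intro j _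
  have hj : e j ≤ d j := h j
  have hfac : ((d j).descFactorial (e j) : K) * ((d j - e j).factorial : K) = ((d j).factorial : K) := by
    rw [← Nat.cast_mul, mul_comm, Nat.factorial_mul_descFactorial hj]
  have hpow : ∀ x : K, x ^ (e j) * x ^ (d j - e j) = x ^ (d j) := by
    intro x; rw [← pow_add, Nat.add_sub_cancel' hj]
  calc ((d j).descFactorial (e j) : K) * ((j:ℕ):K) ^ (e j) * rho k j ^ (e j) *
        (((d - e) j).factorial * ((j:ℕ):K) ^ ((d - e) j) * rho k j ^ ((d - e) j))
      = (((d j).descFactorial (e j) : K) * ((d j - e j).factorial : K)) *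
        (((j:ℕ):K) ^ (e j) * ((j:ℕ):K) ^ (d j - e j)) *
        (rho k j ^ (e j) * rho k j ^ (d j - e j)) := by
        rw [Finsupp.tsub_apply]; ring
    _ = _ := by rw [hfac, hpow, hpow]

/-- Shift-down operator dual to multiplication by `monomial e 1`. -/
def shift (k : ℕ) (e : ℕ+ →₀ ℕ) : SymFun →ₗ[K] SymFun where
  toFun G := Finsupp.sum (AddMonoidAlgebra.coeff G) fun d c => monomial (d - e) (c * rv k d e)
  map_add' f g := by
    rw [AddMonoidAlgebra.coeff_add]
    apply Finsupp.sum_add_index' <;> intros <;> simp [add_mul]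
  map_smul' c f := by
    rw [AddMonoidAlgebra.coeff_smul, Finsupp.sum_smul_index' (by intro i; simp), Finsupp.smul_sum]
    apply Finsupp.sum_congr
    intro d _
    rw [smul_monomial]
    exact congrArg (monomial (d - e))
      (show c * coeff d f * rv k d e = c * (coeff d f * rv k d e) from mul_assoc ..)

lemma shift_monomial (k : ℕ) (e d : ℕ+ →₀ ℕ) (c : K) :
    shift k e (monomial d c) = monomial (d - e) (c * rv k d e) := by
  rw [show shift k e (monomial d c)
      = Finsupp.sum (AddMonoidAlgebra.coeff (monomial d c)) (fun d' c' => monomial (d' - e) (c' * rv k d' e)) from rfl,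
    show AddMonoidAlgebra.coeff (monomial d c : SymFun) = Finsupp.single d c from rfl,
    Finsupp.sum_single_index (by simp)]

/-- The abstract adjoint property. -/
def isAdj (k : ℕ) (F : SymFun) (Φ : SymFun →ₗ[K] SymFun) : Prop :=
  ∀ G H : SymFun, mf k (Φ G) H = mf k G (F * H)

/-- The adjoint of multiplication by `F`. -/
def Dop (k : ℕ) (F : SymFun) : SymFun →ₗ[K] SymFun :=
  ∑ e ∈ F.support, coeff e F • shift k e

lemma mf_monomial_left (k : ℕ) (d : ℕ+ →₀ ℕ) (c : K) (g : SymFun) :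
    mf k (monomial d c) g = c * coeff d g * B k d := by
  rw [mf_comm, mf_monomial_right]; ring

lemma mf_eq_sum_left (k : ℕ) (f g : SymFun) :
    mf k f g = ∑ d ∈ f.support, coeff d f * coeff d g * B k d := by
  rw [mf_eq_sum k f g (S := f.support ∪ g.support) Finset.subset_union_left
    Finset.subset_union_right]
  symm
  apply Finset.sum_subset Finset.subset_union_left
  intro d _ hd
  rw [notMem_support_iff.1 hd]
  ring

lemma mf_shift (k : ℕ) (e : ℕ+ →₀ ℕ) (G H : SymFun) :
    mf k (shift k e G) H = mf k G (monomial e 1 * H) := by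
  conv_lhs => rw [G.as_sum, map_sum, mf_sum_left]
  rw [mf_eq_sum_left]
  apply Finset.sum_congr rfl
  intro d _
  rw [shift_monomial, mf_monomial_left, coeff_monomial_mul']
  by_cases hed : e ≤ d
  · rw [if_pos hed, ← rv_mul_B (k := k) hed, one_mul]; ring
  · rw [rv_eq_zero hed, if_neg hed]; ring

lemma isAdj_Dop (k : ℕ) (F : SymFun) : isAdj k F (Dop k F) := by
  intro G H
  rw [Dop, LinearMap.sum_apply, mf_sum_left]
  conv_rhs => rw [F.as_sum, Finset.sum_mul, mf_sum_right]
  apply Finset.sum_congr rfl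
  intro e _
  rw [LinearMap.smul_apply, mf_smul_left, mf_shift,
    show (monomial e (coeff e F) : SymFun) * H = coeff e F • (monomial e 1 * H) by
      rw [← smul_mul_assoc, smul_monomial, smul_eq_mul, mul_one], mf_smul_right]

lemma mf_sub_left (k : ℕ) (f f' g : SymFun) : mf k (f - f') g = mf k f g - mf k f' g := by
  have := mf_add_left k f (-f') g
  rw [← sub_eq_add_neg] at this
  rw [this, show (-f' : SymFun) = (-1 : K) • f' by simp, mf_smul_left]
  ring

lemma eq_zero_of_mf {k : ℕ} (hk : 1 ≤ k) (f : SymFun) (h : ∀ g, mf k f g = 0) : f = 0 := by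
  ext d
  have := h (monomial d 1)
  rw [mf_monomial_right] at this
  have hB := B_ne_zero hk d
  rw [mul_one] at this
  have h2 : coeff d f = 0 := by
    rcases mul_eq_zero.1 this with h | h
    · exact h
    · exact absurd h hB
  simp [h2]

lemma isAdj_unique {k : ℕ} (hk : 1 ≤ k) {F : SymFun} {Φ Ψ : SymFun →ₗ[K] SymFun}
    (hΦ : isAdj k F Φ) (hΨ : isAdj k F Ψ) : Φ = Ψ := by
  apply LinearMap.ext
  intro G
  have h0 : ∀ H, mf k (Φ G - Ψ G) H = 0 := by
    intro H
    rw [mf_sub_left, hΦ, hΨ, sub_self]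
  have := eq_zero_of_mf hk _ h0
  exact sub_eq_zero.1 this

lemma Dop_eq_of_isAdj {k : ℕ} (hk : 1 ≤ k) {F : SymFun} {Φ : SymFun →ₗ[K] SymFun}
    (hΦ : isAdj k F Φ) : Φ = Dop k F :=
  isAdj_unique hk hΦ (isAdj_Dop k F)


def pIdx (i : ℕ) : ℕ+ := ⟨i + 1, Nat.succ_pos i⟩

lemma pVar_def (i : ℕ) : pVar i = X (pIdx i) := rfl

lemma hZ_ofNat (n : ℕ) : hZ (n : ℤ) = hSym n := by
  rw [hZ, if_pos (by positivity)]
  simp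

lemma hZ_neg {n : ℤ} (hn : n < 0) : hZ n = 0 := by
  rw [hZ, if_neg (by omega)]

lemma newton (n : ℕ) (hn : 1 ≤ n) :
    (n : K) • hSym n = ∑ i ∈ Finset.range n, pVar i * hSym (n - 1 - i) := by
  obtain ⟨m, rfl⟩ : ∃ m, n = m + 1 := ⟨n - 1, by omega⟩
  rw [hSym, smul_smul,
    show ((m + 1 : ℕ) : K) = (m : K) + 1 by push_cast; ring,
    mul_inv_cancel₀ (Nat.cast_add_one_ne_zero m), one_smul]
  apply Finset.sum_congr rfl
  intro i _
  norm_num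

lemma natCast_ne_zero {n : ℕ} (hn : 1 ≤ n) : (n : K) ≠ 0 := by
  exact_mod_cast Nat.cast_ne_zero.2 (by omega)

lemma pderiv_hSym (i : ℕ) (m : ℕ) :
    pderiv (pIdx i) (hSym m) = (((i : ℕ) + 1 : K))⁻¹ • hZ ((m : ℤ) - ((i : ℕ) + 1)) := by
  induction m using Nat.strong_induction_on with
  | _ m IH =>
  match m with
  | 0 =>
    rw [show hSym 0 = 1 by rw [hSym], hZ_neg (by omega)]
    simp
  | Nat.succ m =>
    rw [hSym, Derivation.map_smul, map_sum]
    have hterm : ∀ i' ∈ Finset.range (m + 1),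
        pderiv (pIdx i) (pVar i' * hSym (m - i'))
          = (if i = i' then hSym (m - i') else 0)
            + (((i : ℕ) + 1 : K))⁻¹ • (pVar i' * hZ ((m - i' : ℕ) - ((i : ℕ) + 1))) := by
      intro i' _
      rw [pderiv_mul, pVar_def, IH (m - i') (by omega)]
      congr 1
      · by_cases hii : i = i'
        · rw [if_pos hii, hii, pderiv_X_self, one_mul]
        · rw [pderiv_X_of_ne (fun hc => hii (by
            have := congrArg (fun x : ℕ+ => (x : ℕ)) hc
            simp [pIdx] at this
            omega)), zero_mul, if_neg hii]
      · rw [mul_smul_comm]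
    rw [Finset.sum_congr rfl hterm, Finset.sum_add_distrib, Finset.sum_ite_eq]
    rw [← Finset.smul_sum]
    by_cases him : i < m + 1
    · -- i ≤ m
      have h1 : (if i ∈ Finset.range (m + 1) then hSym (m - i) else 0) = hSym (m - i) := by
        rw [if_pos (Finset.mem_range.2 him)]
      rw [h1]
      have h2 : ∑ i' ∈ Finset.range (m + 1), pVar i' * hZ ((m - i' : ℕ) - ((i : ℕ) + 1))
          = ∑ i' ∈ Finset.range (m - i), pVar i' * hSym (m - i - 1 - i') := by
        rw [← Finset.sum_subset (Finset.range_subset_range.2 (by omega : m - i ≤ m + 1))]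
        · apply Finset.sum_congr rfl
          intro i' hi'
          have hi'' : i' < m - i := Finset.mem_range.1 hi'
          have : ((m - i' : ℕ) : ℤ) - ((i : ℕ) + 1) = ((m - i - 1 - i' : ℕ) : ℤ) := by
            omega
          rw [this, hZ_ofNat]
        · intro i' hi' hni'
          have h3 : ((m - i' : ℕ) : ℤ) - ((i : ℕ) + 1) < 0 := by
            simp only [Finset.mem_range] at hi' hni'
            omega
          rw [hZ_neg h3, mul_zero]
      rw [h2]
      have harg : ((m.succ : ℕ) : ℤ) - ((i : ℕ) + 1) = ((m - i : ℕ) : ℤ) := by omega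
      rw [harg, hZ_ofNat]
      have hne1 : ((m : K) + 1) ≠ 0 := Nat.cast_add_one_ne_zero m
      have hne2 : ((i : K) + 1) ≠ 0 := Nat.cast_add_one_ne_zero i
      have hcast : ((m - i : ℕ) : K) = (m : K) - (i : K) := by
        have hle : i ≤ m := by omega
        push_cast [hle]
        ring
      rcases Nat.eq_zero_or_pos (m - i) with hmi | hmi
      · have hieq : (i : K) = (m : K) := by exact_mod_cast congrArg (Nat.cast : ℕ → K) (by omega : i = m)
        rw [hmi, Finset.range_zero, Finset.sum_empty, smul_zero, add_zero]
        congr 1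
        rw [hieq]
      · rw [← newton (m - i) hmi]
        have collect : hSym (m - i) + ((i : K) + 1)⁻¹ • (((m - i : ℕ) : K) • hSym (m - i))
            = (1 + ((i : K) + 1)⁻¹ * ((m - i : ℕ) : K)) • hSym (m - i) := by
          rw [smul_smul, add_smul, one_smul]
        rw [collect, smul_smul]
        congr 1
        rw [hcast]
        have key : 1 + ((i:K)+1)⁻¹ * ((m:K) - (i:K)) = ((m:K)+1) * ((i:K)+1)⁻¹ := by
          field_simp
          ring
        rw [key, ← mul_assoc, inv_mul_cancel₀ hne1, one_mul]
    · -- i > m : everything vanishes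
      have h1 : (if i ∈ Finset.range (m + 1) then hSym (m - i) else 0) = 0 := by
        rw [if_neg (by simpa using him)]
      have h2 : ∑ i' ∈ Finset.range (m + 1), pVar i' * hZ ((m - i' : ℕ) - ((i : ℕ) + 1)) = 0 := by
        apply Finset.sum_eq_zero
        intro i' hi'
        rw [hZ_neg (by
          simp only [Finset.mem_range] at hi'
          omega), mul_zero]
      rw [h1, h2, hZ_neg (by omega)]
      simp

lemma pderiv_hZ (i : ℕ) (m : ℤ) :
    pderiv (pIdx i) (hZ m) = (((i : ℕ) + 1 : K))⁻¹ • hZ (m - ((i : ℕ) + 1)) := by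
  rcases le_or_gt 0 m with hm | hm
  · obtain ⟨n, rfl⟩ := Int.eq_ofNat_of_zero_le hm
    rw [hZ_ofNat, pderiv_hSym]
  · rw [hZ_neg hm, hZ_neg (by omega), map_zero, smul_zero]


lemma pIdx_cast (i : ℕ) : ((pIdx i : ℕ) : K) = (i : K) + 1 := by
  have : (pIdx i : ℕ) = i + 1 := rfl
  rw [this]
  push_cast
  ring

lemma Dop_pVar (k i : ℕ) (f : SymFun) :
    Dop k (pVar i) f = (((i : K) + 1) * rho k (pIdx i)) • pderiv (pIdx i) f := by
  induction f using MvPolynomial.induction_on' with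
  | monomial d a =>
    rw [Dop, pVar_def, support_X, Finset.sum_singleton, LinearMap.smul_apply, shift_monomial,
      show coeff (Finsupp.single (pIdx i) 1) (X (pIdx i) : SymFun) = 1 from by
        rw [X, coeff_monomial, if_pos rfl],
      one_smul, pderiv_monomial, smul_monomial]
    congr 1
    rw [rv, Finsupp.prod_single_index (by simp), Nat.descFactorial_one, pow_one, pow_one,
      pIdx_cast, smul_eq_mul]
    push_cast
    ring
  | add p q hp hq =>
    rw [map_add, map_add, hp, hq, smul_add]

lemma Dop_mul {k : ℕ} (hk : 1 ≤ k) (F G : SymFun) :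
    Dop k (F * G) = (Dop k F) ∘ₗ (Dop k G) := by
  symm
  apply Dop_eq_of_isAdj hk
  intro x y
  rw [LinearMap.comp_apply, isAdj_Dop k F _ y, isAdj_Dop k G x (F * y),
    show G * (F * y) = F * G * y from by ring]

lemma Dop_smul {k : ℕ} (hk : 1 ≤ k) (c : K) (F : SymFun) :
    Dop k (c • F) = c • Dop k F := by
  symm
  apply Dop_eq_of_isAdj hk
  intro x y
  rw [LinearMap.smul_apply, mf_smul_left, isAdj_Dop k F x y, ← mf_smul_right,
    ← smul_mul_assoc]

lemma Dop_sum {k : ℕ} (hk : 1 ≤ k) {ι : Type} (s : Finset ι) (F : ι → SymFun) :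
    Dop k (∑ i ∈ s, F i) = ∑ i ∈ s, Dop k (F i) := by
  symm
  apply Dop_eq_of_isAdj hk
  intro x y
  rw [LinearMap.sum_apply, mf_sum_left,
    Finset.sum_congr rfl (fun i _ => isAdj_Dop k (F i) x y), ← mf_sum_right, ← Finset.sum_mul]

lemma Dop_one {k : ℕ} (hk : 1 ≤ k) : Dop k (1 : SymFun) = LinearMap.id := by
  symm
  apply Dop_eq_of_isAdj hk
  intro x y
  rw [LinearMap.id_apply, one_mul]

lemma newton_op {k : ℕ} (hk : 1 ≤ k) (n : ℕ) (hn : 1 ≤ n) (f : SymFun) :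
    (n : K) • Dop k (hSym n) f
      = ∑ i ∈ Finset.range n, Dop k (pVar i) (Dop k (hSym (n - 1 - i)) f) := by
  have h1 := congrArg (Dop k) (newton n hn)
  rw [Dop_smul hk, Dop_sum hk] at h1
  have h2 := congrArg (fun Φ : SymFun →ₗ[K] SymFun => Φ f) h1
  simp only [LinearMap.smul_apply, LinearMap.sum_apply] at h2
  rw [h2]
  exact Finset.sum_congr rfl fun i _ => by rw [Dop_mul hk, LinearMap.comp_apply]

lemma Dop_pVar_comm (k i : ℕ) (m : ℤ) (f : SymFun) :
    Dop k (pVar i) (hZ m * f)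
      = rho k (pIdx i) • (hZ (m - ((i : ℕ) + 1)) * f) + hZ m * Dop k (pVar i) f := by
  rw [Dop_pVar, Dop_pVar, pderiv_mul, pderiv_hZ, smul_add]
  congr 1
  · rw [smul_mul_assoc, smul_smul]
    congr 1
    rw [mul_comm ((i : K) + 1), mul_assoc,
      mul_inv_cancel₀ (Nat.cast_add_one_ne_zero i), mul_one]
  · rw [mul_smul_comm]


/-- Gaussian binomial `binom(k+l-1, l)_t`. -/
def gb (k l : ℕ) : K := ∏ i ∈ Finset.range l, (1 - tt ^ (k + i)) / (1 - tt ^ (i + 1))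

/-- `r_j = (1-t^{kj})/(1-t^j)`. -/
def rr (k j : ℕ) : K := (1 - tt ^ (k * j)) / (1 - tt ^ j)

/-- numerators and denominators -/
def NN (a b : ℕ) : K := ∏ i ∈ Finset.range b, (1 - tt ^ (a + i))
def DD (b : ℕ) : K := ∏ i ∈ Finset.range b, (1 - tt ^ (i + 1))

lemma DD_ne_zero (b : ℕ) : DD b ≠ 0 :=
  Finset.prod_ne_zero_iff.2 fun i _ => one_sub_tt_pow_ne (by omega)

lemma gb_eq (k l : ℕ) : gb k l = NN k l / DD l := by
  rw [gb, NN, DD, Finset.prod_div_distrib]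

lemma NN_succ (a b : ℕ) : NN a (b + 1) = NN a b * (1 - tt ^ (a + b)) := Finset.prod_range_succ _ b

lemma NN_succ' (a b : ℕ) : NN a (b + 1) = (1 - tt ^ a) * NN (a + 1) b := by
  rw [NN, NN, Finset.prod_range_succ']
  rw [Finset.prod_congr rfl (fun i (_ : i ∈ Finset.range b) =>
    show (1 - tt ^ (a + (i + 1))) = (1 - tt ^ (a + 1 + i)) from by
      rw [show a + (i + 1) = a + 1 + i from by omega]), mul_comm]
  norm_num

lemma DD_succ (b : ℕ) : DD (b + 1) = DD b * (1 - tt ^ (b + 1)) := Finset.prod_range_succ _ b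

lemma gb_pascal (k s : ℕ) : gb (k + 1) (s + 1) = gb k (s + 1) + tt ^ k * gb (k + 1) s := by
  rw [gb_eq, gb_eq, gb_eq, NN_succ, NN_succ', DD_succ]
  have h1 := DD_ne_zero s
  have h2 := one_sub_tt_pow_ne (show s + 1 ≠ 0 by omega)
  field_simp
  ring


section PS
open PowerSeries

def Gs (a : K) : PowerSeries K := PowerSeries.mk fun n => a ^ n
def Us (k : ℕ) : PowerSeries K := ∏ i ∈ Finset.range k, Gs (tt ^ i)
def Ts (a : K) : PowerSeries K := PowerSeries.mk fun j => if j = 0 then 0 else a ^ j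
def Rs (k : ℕ) : PowerSeries K := ∑ i ∈ Finset.range k, Ts (tt ^ i)

lemma X_mul_deriv_G (a : K) :
    (PowerSeries.X : PowerSeries K) * (PowerSeries.derivative K (Gs a)) = Ts a * Gs a := by
  ext n
  cases n with
  | zero =>
    rw [PowerSeries.coeff_zero_X_mul, PowerSeries.coeff_mul]
    rw [Finset.Nat.sum_antidiagonal_eq_sum_range_succ_mk]
    simp [Ts, Gs, PowerSeries.coeff_mk]
  | succ n =>
    rw [PowerSeries.coeff_succ_X_mul, PowerSeries.coeff_derivative, PowerSeries.coeff_mul,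
      Finset.Nat.sum_antidiagonal_eq_sum_range_succ_mk, Finset.sum_range_succ']
    have h0 : (PowerSeries.coeff 0 (Ts a)) * (PowerSeries.coeff (n + 1 - 0) (Gs a)) = 0 := by
      simp [Ts, PowerSeries.coeff_mk]
    rw [h0, add_zero]
    have hterm : ∀ i ∈ Finset.range (n + 1),
        (PowerSeries.coeff (i + 1) (Ts a)) * (PowerSeries.coeff (n + 1 - (i + 1)) (Gs a))
          = a ^ (n + 1) := by
      intro i hi
      have hi' : i < n + 1 := Finset.mem_range.1 hi
      rw [show (PowerSeries.coeff (i+1)) (Ts a) = a ^ (i+1) from by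
          simp [Ts, PowerSeries.coeff_mk],
        show (PowerSeries.coeff (n + 1 - (i+1))) (Gs a) = a ^ (n - i) from by
          simp [Gs, PowerSeries.coeff_mk],
        ← pow_add,
        show i + 1 + (n - i) = n + 1 from by omega]
    rw [Finset.sum_congr rfl hterm, Finset.sum_const, Finset.card_range,
      show (PowerSeries.coeff (n+1)) (Gs a) = a ^ (n+1) from by simp [Gs, PowerSeries.coeff_mk],
      nsmul_eq_mul]
    push_cast
    ring

lemma X_mul_deriv_U (k : ℕ) :
    (PowerSeries.X : PowerSeries K) * (PowerSeries.derivative K (Us k)) = Rs k * Us k := by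
  induction k with
  | zero =>
    rw [Us, Rs, Finset.range_zero, Finset.prod_empty, Finset.sum_empty,
      Derivation.map_one_eq_zero]
    simp
  | succ k IH =>
    rw [Us, Finset.prod_range_succ, ← Us, Derivation.leibniz, Rs, Finset.sum_range_succ, ← Rs,
      smul_eq_mul, smul_eq_mul, mul_add]
    rw [show (PowerSeries.X : PowerSeries K) * (Us k * (PowerSeries.derivative K) (Gs (tt ^ k)))
        = Us k * ((PowerSeries.X : PowerSeries K) * (PowerSeries.derivative K) (Gs (tt ^ k)))
        from by ring,
      show (PowerSeries.X : PowerSeries K) * (Gs (tt ^ k) * (PowerSeries.derivative K) (Us k))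
        = Gs (tt ^ k) * ((PowerSeries.X : PowerSeries K) * (PowerSeries.derivative K) (Us k))
        from by ring,
      X_mul_deriv_G, IH]
    ring


lemma coeff_Gs (a : K) (n : ℕ) : PowerSeries.coeff n (Gs a) = a ^ n :=
  PowerSeries.coeff_mk _ _

def Ws (k s : ℕ) : K := ∑ j ∈ Finset.range (s + 1), gb k j * (tt ^ k) ^ (s - j)

lemma coeff_U : ∀ k s, PowerSeries.coeff s (Us k) = gb k s := by
  intro k
  induction k with
  | zero =>
    intro s
    rw [Us, Finset.range_zero, Finset.prod_empty, PowerSeries.coeff_one]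
    cases s with
    | zero => simp [gb]
    | succ n =>
      rw [if_neg (by omega)]
      symm
      apply Finset.prod_eq_zero (Finset.mem_range.2 (show 0 < n + 1 by omega))
      norm_num
  | succ k IH =>
    have hW : ∀ s, PowerSeries.coeff s (Us (k + 1)) = Ws k s := by
      intro s
      rw [Us, Finset.prod_range_succ, ← Us, PowerSeries.coeff_mul,
        Finset.Nat.sum_antidiagonal_eq_sum_range_succ_mk, Ws]
      exact Finset.sum_congr rfl fun j _ => by rw [IH, coeff_Gs]
    intro s
    induction s with
    | zero => rw [hW, Ws]; simp [gb]
    | succ s IHs =>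
      have hWs : Ws k s = gb (k + 1) s := (hW s).symm.trans IHs
      rw [hW, Ws, Finset.sum_range_succ, show s + 1 - (s + 1) = 0 from by omega, pow_zero,
        mul_one, gb_pascal]
      have hshift : ∑ j ∈ Finset.range (s + 1), gb k j * (tt ^ k) ^ (s + 1 - j)
          = tt ^ k * Ws k s := by
        rw [Ws, Finset.mul_sum]
        apply Finset.sum_congr rfl
        intro j hj
        rw [show s + 1 - j = (s - j) + 1 from by
            have := Finset.mem_range.1 hj
            omega,
          pow_succ']
        ring
      rw [hshift, hWs, add_comm]

lemma coeff_Rs_zero (k : ℕ) : PowerSeries.coeff 0 (Rs k) = 0 := by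
  rw [Rs, map_sum]
  apply Finset.sum_eq_zero
  intro i _
  simp [Ts, PowerSeries.coeff_mk]

lemma coeff_Rs (k : ℕ) {j : ℕ} (hj : j ≠ 0) : PowerSeries.coeff j (Rs k) = rr k j := by
  rw [Rs, map_sum]
  have hterm : ∀ i ∈ Finset.range k,
      PowerSeries.coeff j (Ts (tt ^ i)) = (tt ^ j) ^ i := by
    intro i _
    rw [show PowerSeries.coeff j (Ts (tt ^ i)) = (tt ^ i) ^ j from by
      simp [Ts, PowerSeries.coeff_mk, if_neg hj], ← pow_mul, mul_comm, pow_mul]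
  rw [Finset.sum_congr rfl hterm, geom_sum_eq (tt_pow_ne_one hj) k, rr, pow_mul',
    ← neg_div_neg_eq, neg_sub, neg_sub]

theorem scalar_id (k s : ℕ) :
    (s : K) * gb k s = ∑ l ∈ Finset.range s, gb k l * rr k (s - l) := by
  cases s with
  | zero => simp
  | succ n =>
    have h := congrArg (PowerSeries.coeff (n + 1)) (X_mul_deriv_U k)
    rw [PowerSeries.coeff_succ_X_mul, PowerSeries.coeff_derivative, coeff_U,
      PowerSeries.coeff_mul, Finset.Nat.sum_antidiagonal_eq_sum_range_succ_mk,
      Finset.sum_range_succ', coeff_Rs_zero, zero_mul, add_zero] at h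
    have hterm : ∀ i ∈ Finset.range (n + 1),
        PowerSeries.coeff (i + 1) (Rs k) * PowerSeries.coeff (n + 1 - (i + 1)) (Us k)
          = rr k (i + 1) * gb k (n - i) := by
      intro i _
      rw [coeff_Rs k (by omega : i + 1 ≠ 0), show n + 1 - (i + 1) = n - i from by omega, coeff_U]
    rw [Finset.sum_congr rfl hterm] at h
    rw [← Finset.sum_range_reflect (fun l => gb k l * rr k (n + 1 - l)) (n + 1)]
    have hterm2 : ∀ i ∈ Finset.range (n + 1),
        gb k (n + 1 - 1 - i) * rr k (n + 1 - (n + 1 - 1 - i)) = rr k (i + 1) * gb k (n - i) := by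
      intro i hi
      have hi' := Finset.mem_range.1 hi
      rw [show n + 1 - 1 - i = n - i from by omega, show n + 1 - (n - i) = i + 1 from by omega]
      ring
    rw [Finset.sum_congr rfl hterm2, ← h]
    push_cast
    ring

end PS


lemma rho_eq_rr (k i : ℕ) : rho k (pIdx i) = rr k (i + 1) := by
  rw [rho, rr, ← pow_mul]
  rfl

lemma tri_swap {M : Type*} [AddCommMonoid M] (n : ℕ) (F : ℕ → ℕ → M) :
    ∑ i ∈ Finset.range n, ∑ l ∈ Finset.range (n - i), F i l
      = ∑ l ∈ Finset.range n, ∑ i ∈ Finset.range (n - l), F i l := by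
  rw [Finset.sum_sigma', Finset.sum_sigma']
  apply Finset.sum_nbij' (i := fun p => (⟨p.2, p.1⟩ : (_ : ℕ) × ℕ))
    (j := fun p => (⟨p.2, p.1⟩ : (_ : ℕ) × ℕ))
  · intro a ha
    simp only [Finset.mem_sigma, Finset.mem_range] at *
    omega
  · intro a ha
    simp only [Finset.mem_sigma, Finset.mem_range] at *
    omega
  · intro a ha; rfl
  · intro a ha; rfl
  · intro a ha; rfl

lemma tri_swap2 {M : Type*} [AddCommMonoid M] (n : ℕ) (F : ℕ → ℕ → M) :
    ∑ l ∈ Finset.range n, ∑ s ∈ Finset.Ico (l + 1) (n + 1), F l s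
      = ∑ s ∈ Finset.Ico 1 (n + 1), ∑ l ∈ Finset.range s, F l s := by
  rw [Finset.sum_sigma', Finset.sum_sigma']
  apply Finset.sum_nbij' (i := fun p => (⟨p.2, p.1⟩ : (_ : ℕ) × ℕ))
    (j := fun p => (⟨p.2, p.1⟩ : (_ : ℕ) × ℕ))
  · intro a ha
    simp only [Finset.mem_sigma, Finset.mem_range, Finset.mem_Ico] at *
    omega
  · intro a ha
    simp only [Finset.mem_sigma, Finset.mem_range, Finset.mem_Ico] at *
    omega
  · intro a ha; rfl
  · intro a ha; rfl
  · intro a ha; rfl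

set_option maxHeartbeats 1600000 in
lemma main {k : ℕ} (hk : 1 ≤ k) :
    ∀ n : ℕ, ∀ m : ℤ, ∀ f : SymFun,
      Dop k (hSym n) (hZ m * f)
        = ∑ l ∈ Finset.range (n + 1),
            gb k l • (hZ (m - (l : ℕ)) * Dop k (hZ ((n : ℕ) - (l : ℕ))) f) := by
  intro n
  induction n using Nat.strong_induction_on with
  | _ n IH =>
  intro m f
  rcases Nat.eq_zero_or_pos n with hn | hn
  · subst hn
    have h1 : hSym 0 = 1 := by rw [hSym]
    have h0 : hZ (0 : ℤ) = 1 := by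
      rw [show (0 : ℤ) = ((0 : ℕ) : ℤ) from by norm_num, hZ_ofNat, h1]
    rw [h1, Dop_one hk, Finset.sum_range_one]
    simp [gb, h0, Dop_one hk]
  · refine smul_right_injective SymFun (natCast_ne_zero hn) ?_
    show (n : K) • Dop k (hSym n) (hZ m * f)
      = (n : K) • ∑ l ∈ Finset.range (n + 1),
          gb k l • (hZ (m - (l : ℕ)) * Dop k (hZ ((n : ℕ) - (l : ℕ))) f)
    have step1 : (n : K) • Dop k (hSym n) (hZ m * f)
        = ∑ i ∈ Finset.range n, ∑ l ∈ Finset.range (n - i),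
            ((gb k l * rr k (i + 1)) •
                (hZ (m - ((l + i + 1 : ℕ) : ℤ)) *
                  Dop k (hZ (((n : ℕ) : ℤ) - ((l + i + 1 : ℕ) : ℤ))) f)
              + gb k l •
                (hZ (m - (l : ℕ)) *
                  Dop k (pVar i) (Dop k (hZ (((n - 1 - i : ℕ) : ℤ) - (l : ℕ))) f))) := by
      rw [newton_op hk n hn]
      apply Finset.sum_congr rfl
      intro i hi
      have hi' : i < n := Finset.mem_range.1 hi
      rw [IH (n - 1 - i) (by omega) m f, map_sum,
        show n - 1 - i + 1 = n - i from by omega]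
      apply Finset.sum_congr rfl
      intro l hl
      have hl' : l < n - i := Finset.mem_range.1 hl
      rw [map_smul, Dop_pVar_comm, smul_add, smul_smul]
      congr 1
      rw [mul_comm (gb k l) (rho k (pIdx i)), rho_eq_rr, mul_comm (rr k (i + 1)) (gb k l),
        show m - (l : ℕ) - ((i : ℕ) + 1) = m - ((l + i + 1 : ℕ) : ℤ) from by push_cast; ring,
        show ((n - 1 - i : ℕ) : ℤ) - ((l : ℕ) : ℤ)
            = ((n : ℕ) : ℤ) - ((l + i + 1 : ℕ) : ℤ) from by omega]
    have hA : ∑ i ∈ Finset.range n, ∑ l ∈ Finset.range (n - i),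
        (gb k l * rr k (i + 1)) •
          (hZ (m - ((l + i + 1 : ℕ) : ℤ)) *
            Dop k (hZ (((n : ℕ) : ℤ) - ((l + i + 1 : ℕ) : ℤ))) f)
        = ∑ s ∈ Finset.range (n + 1),
            (((s : ℕ) : K) * gb k s) •
              (hZ (m - (s : ℕ)) * Dop k (hZ (((n : ℕ) : ℤ) - ((s : ℕ) : ℤ))) f) := by
      rw [tri_swap]
      have hinner : ∀ l ∈ Finset.range n,
          ∑ i ∈ Finset.range (n - l),
              (gb k l * rr k (i + 1)) •
                (hZ (m - ((l + i + 1 : ℕ) : ℤ)) *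
                  Dop k (hZ (((n : ℕ) : ℤ) - ((l + i + 1 : ℕ) : ℤ))) f)
            = ∑ s ∈ Finset.Ico (l + 1) (n + 1),
                (gb k l * rr k (s - l)) •
                  (hZ (m - (s : ℕ)) * Dop k (hZ (((n : ℕ) : ℤ) - ((s : ℕ) : ℤ))) f) := by
        intro l hl
        rw [Finset.sum_Ico_eq_sum_range, show n + 1 - (l + 1) = n - l from by omega]
        apply Finset.sum_congr rfl
        intro i _
        rw [show l + 1 + i - l = i + 1 from by omega,
          show l + 1 + i = l + i + 1 from by omega]
      rw [Finset.sum_congr rfl hinner, tri_swap2]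
      have hbot : ∑ s ∈ Finset.range (n + 1),
          (((s : ℕ) : K) * gb k s) •
            (hZ (m - (s : ℕ)) * Dop k (hZ (((n : ℕ) : ℤ) - ((s : ℕ) : ℤ))) f)
          = ∑ s ∈ Finset.Ico 1 (n + 1),
            (((s : ℕ) : K) * gb k s) •
              (hZ (m - (s : ℕ)) * Dop k (hZ (((n : ℕ) : ℤ) - ((s : ℕ) : ℤ))) f) := by
        rw [Finset.range_eq_Ico, Finset.sum_eq_sum_Ico_succ_bot (show 0 < n + 1 from by omega)]
        simp
      rw [hbot]
      apply Finset.sum_congr rfl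
      intro s hs
      rw [← Finset.sum_smul, ← scalar_id]
    have hC : ∑ i ∈ Finset.range n, ∑ l ∈ Finset.range (n - i),
        gb k l •
          (hZ (m - (l : ℕ)) *
            Dop k (pVar i) (Dop k (hZ (((n - 1 - i : ℕ) : ℤ) - (l : ℕ))) f))
        = ∑ l ∈ Finset.range (n + 1),
            (((n - l : ℕ) : K) * gb k l) •
              (hZ (m - (l : ℕ)) * Dop k (hZ (((n : ℕ) : ℤ) - ((l : ℕ) : ℤ))) f) := by
      rw [tri_swap, Finset.sum_range_succ,
        show (((n - n : ℕ) : K) * gb k n) •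
            (hZ (m - (n : ℕ)) * Dop k (hZ (((n : ℕ) : ℤ) - ((n : ℕ) : ℤ))) f) = 0 from by
          norm_num [Nat.sub_self],
        add_zero]
      apply Finset.sum_congr rfl
      intro l hl
      have hl' : l < n := Finset.mem_range.1 hl
      have hop : ∀ i ∈ Finset.range (n - l),
          gb k l •
            (hZ (m - (l : ℕ)) *
              Dop k (pVar i) (Dop k (hZ (((n - 1 - i : ℕ) : ℤ) - (l : ℕ))) f))
            = gb k l •
              (hZ (m - (l : ℕ)) * Dop k (pVar i) (Dop k (hSym (n - l - 1 - i)) f)) := by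
        intro i hi
        have hi' : i < n - l := Finset.mem_range.1 hi
        rw [show ((n - 1 - i : ℕ) : ℤ) - ((l : ℕ) : ℤ) = ((n - l - 1 - i : ℕ) : ℤ) from by omega,
          hZ_ofNat]
      rw [Finset.sum_congr rfl hop, ← Finset.smul_sum, ← Finset.mul_sum,
        ← newton_op hk (n - l) (by omega) f,
        show hSym (n - l) = hZ (((n : ℕ) : ℤ) - ((l : ℕ) : ℤ)) from by
          rw [show ((n : ℕ) : ℤ) - ((l : ℕ) : ℤ) = ((n - l : ℕ) : ℤ) from by omega, hZ_ofNat],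
        mul_smul_comm, smul_smul, mul_comm (gb k l)]
    rw [step1, Finset.sum_congr rfl (fun i (_ : i ∈ Finset.range n) => Finset.sum_add_distrib),
      Finset.sum_add_distrib, hA, hC, ← Finset.sum_add_distrib, Finset.smul_sum]
    apply Finset.sum_congr rfl
    intro l hl
    have hl' : l < n + 1 := Finset.mem_range.1 hl
    rw [smul_smul, ← add_smul, ← add_mul]
    congr 2
    rw [Nat.cast_sub (by omega : l ≤ n)]
    ring

end HComm

open HComm in
/-- The operator identity
`h_n^* ∘ (h_m ⬝ −) = ∑_{l ≥ 0} binom(k+l-1,l)_t ⬝ (h_{m-l} ⬝ −) ∘ h_{n-l}^*`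
on `Λ_{t^k,t}`, where `h_j^*` (here `adj j`) is the adjoint of multiplication by
`h_j` with respect to the Macdonald inner product at `q = t^k`, `h_j = 0` for
`j < 0`, and `binom(k+l-1,l)_t = ∏_{i=1}^l (1-t^{k+i-1})/(1-t^i)` is the
Gaussian binomial coefficient.  (Terms with `l > min m n` vanish, so the sum is
truncated at `min m n`.) -/
theorem h_commutation_relation (k : ℕ) (hk : 1 ≤ k) (m n : ℕ)
    (adj : ℤ → SymFun →ₗ[K] SymFun)
    (hadj : ∀ (j : ℤ) (g h : SymFun),
      macForm (tt ^ k) tt (adj j g) h = macForm (tt ^ k) tt g (hZ j * h)) :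
    ∀ f : SymFun,
      adj n (hSym m * f)
        = ∑ l ∈ Finset.range (min m n + 1),
            (∏ i ∈ Finset.range l, (1 - tt ^ (k + i)) / (1 - tt ^ (i + 1))) •
              (hZ ((m : ℤ) - l) * adj ((n : ℤ) - l) f) := by
  intro f
  have hDop : ∀ j : ℤ, adj j = Dop k (hZ j) := fun j => Dop_eq_of_isAdj hk (hadj j)
  have gbd : ∀ l : ℕ,
      (∏ i ∈ Finset.range l, (1 - tt ^ (k + i)) / (1 - tt ^ (i + 1))) = gb k l := fun l => rfl
  rw [hDop ((n : ℕ) : ℤ),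
    show (hSym m * f : SymFun) = hZ ((m : ℕ) : ℤ) * f from by rw [hZ_ofNat],
    show Dop k (hZ ((n : ℕ) : ℤ)) = Dop k (hSym n) from by rw [hZ_ofNat],
    main hk n ((m : ℕ) : ℤ) f]
  simp only [hDop, gbd]
  symm
  apply Finset.sum_subset (Finset.range_subset_range.2 (by omega : min m n + 1 ≤ n + 1))
  intro l hl hnl
  simp only [Finset.mem_range] at hl hnl
  have hml : ((m : ℕ) : ℤ) - (l : ℕ) < 0 := by
    have : m < l := by omega
    omega
  rw [hZ_neg hml, zero_mul, smul_zero]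

end
end
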